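/- For every μ > 0, the ratio of derivatives f′(μ)/g′(μ) equals μ/(3(1+μ)); this function of μ is strictly increasing on (0,∞) and is strictly less than 1/3 for every μ > 0 (so the squared sound speed dp̃/dε̃ of the noninteracting neutron gas never exceeds one third). -/

import Mathlib

/-- Dimensionless pressure of a noninteracting neutron gas. -/
noncomputable def f (μ : ℝ) : ℝ :=
  (1/8) * ((2*μ - 3) * Real.sqrt (μ + μ^2) + 3 * Real.log (Real.sqrt μ + Real.sqrt (1 + μ)))

/-- Dimensionless energy density of a noninteracting neutron gas. -/
noncomputable def g (μ : ℝ) : ℝ :=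
  (1/8) * ((6*μ + 3) * Real.sqrt (μ + μ^2) - 3 * Real.log (Real.sqrt μ + Real.sqrt (1 + μ)))

lemma sqrt_term_deriv (μ : ℝ) (h : 0 < μ) :
    HasDerivAt (fun x : ℝ => Real.sqrt (x + x^2)) ((1+2*μ)/(2*Real.sqrt (μ+μ^2))) μ := by
  have h1 : HasDerivAt (fun x : ℝ => x + x^2) (1+2*μ) μ := by
    simpa [Pi.add_def] using (hasDerivAt_id' μ).add ((hasDerivAt_pow 2 μ))
  have := h1.sqrt (by nlinarith)
  simpa [div_eq_mul_inv] using this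

lemma log_term_deriv (μ : ℝ) (h : 0 < μ) :
    HasDerivAt (fun x : ℝ => Real.log (Real.sqrt x + Real.sqrt (1 + x)))
      (1 / (2 * Real.sqrt (μ + μ^2))) μ := by
  have h1 : 0 < 1 + μ := by linarith
  have hsμ : 0 < Real.sqrt μ := Real.sqrt_pos.2 h
  have hs1 : 0 < Real.sqrt (1 + μ) := Real.sqrt_pos.2 h1
  have d1 : HasDerivAt (fun x : ℝ => Real.sqrt x + Real.sqrt (1 + x))
      (1/(2*Real.sqrt μ) + 1/(2*Real.sqrt (1+μ))) μ := by
    have a := Real.hasDerivAt_sqrt h.ne'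
    have b : HasDerivAt (fun x : ℝ => Real.sqrt (1 + x)) (1/(2*Real.sqrt (1+μ))) μ := by
      have c : HasDerivAt (fun x : ℝ => 1 + x) 1 μ := by
        simpa using (hasDerivAt_id μ).const_add 1
      simpa using c.sqrt h1.ne'
    exact a.add b
  have := d1.log (by positivity)
  convert this using 1
  have hmul : Real.sqrt μ * Real.sqrt (1+μ) = Real.sqrt (μ + μ^2) := by
    rw [← Real.sqrt_mul h.le]; ring_nf
  rw [← hmul]
  field_simp
  ring

lemma f_deriv (μ : ℝ) (h : 0 < μ) :
    HasDerivAt f (μ^2 / (2 * Real.sqrt (μ + μ^2))) μ := by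
  have hs : 0 < Real.sqrt (μ + μ^2) := Real.sqrt_pos.2 (by nlinarith)
  have hsq : Real.sqrt (μ + μ^2) ^ 2 = μ + μ^2 := Real.sq_sqrt (by nlinarith)
  have d1 : HasDerivAt (fun x : ℝ => 2*x - 3) 2 μ := by
    simpa using ((hasDerivAt_id μ).const_mul 2).sub_const 3
  have d2 := sqrt_term_deriv μ h
  have d3 := log_term_deriv μ h
  have D : HasDerivAt f ((1/8) * ((2 * Real.sqrt (μ+μ^2) +
      (2*μ-3) * ((1+2*μ)/(2*Real.sqrt (μ+μ^2)))) +
      3 * (1 / (2 * Real.sqrt (μ + μ^2))))) μ := by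
    exact (((d1.mul d2).add (d3.const_mul 3)).const_mul (1/8))
  convert D using 1
  field_simp
  nlinarith [hsq, hs, Real.sq_sqrt (show (0:ℝ) ≤ μ * (1 + μ) by positivity)]

lemma g_deriv (μ : ℝ) (h : 0 < μ) :
    HasDerivAt g (3 * Real.sqrt (μ + μ^2) / 2) μ := by
  have hs : 0 < Real.sqrt (μ + μ^2) := Real.sqrt_pos.2 (by nlinarith)
  have hsq : Real.sqrt (μ + μ^2) ^ 2 = μ + μ^2 := Real.sq_sqrt (by nlinarith)
  have d1 : HasDerivAt (fun x : ℝ => 6*x + 3) 6 μ := by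
    simpa using ((hasDerivAt_id μ).const_mul 6).add_const 3
  have d2 := sqrt_term_deriv μ h
  have d3 := log_term_deriv μ h
  have D : HasDerivAt g ((1/8) * ((6 * Real.sqrt (μ+μ^2) +
      (6*μ+3) * ((1+2*μ)/(2*Real.sqrt (μ+μ^2)))) -
      3 * (1 / (2 * Real.sqrt (μ + μ^2))))) μ := by
    exact (((d1.mul d2).sub (d3.const_mul 3)).const_mul (1/8))
  convert D using 1
  field_simp
  nlinarith [hsq, hs, Real.sq_sqrt (show (0:ℝ) ≤ μ * (1 + μ) by positivity)]

/-- For every μ > 0, f′(μ)/g′(μ) = μ/(3(1+μ)); this function is strictly increasing on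
    (0,∞) and strictly less than 1/3 for every μ > 0 (the squared sound speed of the
    noninteracting neutron gas never exceeds one third). -/
theorem sound_speed :
    (∀ μ : ℝ, 0 < μ → deriv f μ / deriv g μ = μ / (3 * (1 + μ))) ∧
    StrictMonoOn (fun μ : ℝ => μ / (3 * (1 + μ))) (Set.Ioi 0) ∧
    (∀ μ : ℝ, 0 < μ → μ / (3 * (1 + μ)) < 1/3) := by
  refine ⟨?_, ?_, ?_⟩
  · intro μ h
    have hs : 0 < Real.sqrt (μ + μ^2) := Real.sqrt_pos.2 (by nlinarith)
    have hsq : Real.sqrt (μ + μ^2) ^ 2 = μ + μ^2 := Real.sq_sqrt (by nlinarith)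
    rw [(f_deriv μ h).deriv, (g_deriv μ h).deriv]
    rw [div_eq_div_iff (by positivity) (by positivity)]
    field_simp
    nlinarith [hsq, hs, Real.sq_sqrt (show (0:ℝ) ≤ μ * (1 + μ) by positivity)]
  · intro a ha b hb hab
    simp only [Set.mem_Ioi] at ha hb
    rw [div_lt_div_iff₀ (by positivity) (by positivity)]
    nlinarith
  · intro μ h
    rw [div_lt_div_iff₀ (by positivity) (by norm_num)]
    linarith
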